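/- Let C be a nonempty constructible subset of a Noetherian topological space, with canonical presentation determined by the descending chain V_1' ⊇ V_1'' ⊇ ⋯. Then the closure of C equals V_1', and the dimension of any irreducible component of V_1'' is strictly less than the maximal dimension of an irreducible component of V_1' (assuming V_1'' is nonempty and the space is finite-dimensional). -/

import Mathlib

open Set TopologicalSpace

variable {X : Type*} [TopologicalSpace X]

/-- A set is locally closed iff it is the difference of two closed sets. -/
def PaperLocallyClosed (s : Set X) : Prop :=
  ∃ V W : Set X, IsClosed V ∧ IsClosed W ∧ s = V \ W

/-- A set is constructible iff it is a finite union of locally closed sets. -/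
def PaperConstructible (s : Set X) : Prop :=
  ∃ (m : ℕ) (V : Fin m → Set X), (∀ i, PaperLocallyClosed (V i)) ∧ s = ⋃ i, V i

/-- `T` is an irreducible component of `V`: a maximal irreducible closed subset of `V`. -/
def IsIrredCompOf (T V : Set X) : Prop :=
  IsClosed T ∧ IsIrreducible T ∧ T ⊆ V ∧
    ∀ T' : Set X, IsClosed T' → IsIrreducible T' → T' ⊆ V → T ⊆ T' → T' = T

/-- The canonical presentation of a constructible set: a disjoint union
`⋃ i, V' i \ V'' i` along a descending chain of closed sets
`V' 0 ⊇ V'' 0 ⊇ V' 1 ⊇ V'' 1 ⊇ ⋯` (eventually empty), no two consecutive members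
of the chain sharing an irreducible component. -/
def IsCanonicalPresentation {X : Type*} [TopologicalSpace X]
    (C : Set X) (V' V'' : ℕ → Set X) : Prop :=
  (∀ i, IsClosed (V' i)) ∧ (∀ i, IsClosed (V'' i)) ∧
  (∀ i, V'' i ⊆ V' i) ∧ (∀ i, V' (i + 1) ⊆ V'' i) ∧
  (∃ m, ∀ i, m ≤ i → V' i = ∅) ∧
  C = ⋃ i, V' i \ V'' i ∧
  (∀ i j, i ≠ j → Disjoint (V' i \ V'' i) (V' j \ V'' j)) ∧
  (∀ i, ∀ T : Set X, IsIrredCompOf T (V' i) → ¬ IsIrredCompOf T (V'' i)) ∧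
  (∀ i, ∀ T : Set X, IsIrredCompOf T (V'' i) → ¬ IsIrredCompOf T (V' (i + 1)))

/-- The union of a chain of preirreducible sets is preirreducible. -/
lemma aux_chainUnion_preirr {c : Set (Set X)} (hc : ∀ s ∈ c, IsPreirreducible s)
    (hcc : IsChain (· ⊆ ·) c) : IsPreirreducible (⋃₀ c) := by
  rintro u v hu hv ⟨y, hy, hyu⟩ ⟨z, hz, hzv⟩
  obtain ⟨p, hpc, hyp⟩ := hy
  obtain ⟨q, hqc, hzq⟩ := hz
  rcases hcc.total hpc hqc with hpq | hqp
  · obtain ⟨x, hxq, hxuv⟩ := hc q hqc u v hu hv ⟨y, hpq hyp, hyu⟩ ⟨z, hzq, hzv⟩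
    exact ⟨x, mem_sUnion_of_mem hxq hqc, hxuv⟩
  · obtain ⟨x, hxp, hxuv⟩ := hc p hpc u v hu hv ⟨y, hyp, hyu⟩ ⟨z, hqp hzq, hzv⟩
    exact ⟨x, mem_sUnion_of_mem hxp hpc, hxuv⟩

/-- Any irreducible closed subset of a closed set `V` is contained in an irreducible
component of `V`. -/
lemma aux_exists_isIrredCompOf {V T0 : Set X} (hV : IsClosed V) (hT0 : IsIrreducible T0)
    (hsub : T0 ⊆ V) : ∃ T, IsIrredCompOf T V ∧ T0 ⊆ T := by
  obtain ⟨m, hm0, hmax⟩ := zorn_subset_nonempty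
      {t : Set X | IsPreirreducible t ∧ t ⊆ V}
      (fun c hc hcc _ => ⟨⋃₀ c, ⟨aux_chainUnion_preirr (fun s hs => (hc hs).1) hcc,
        sUnion_subset fun s hs => (hc hs).2⟩, fun s hs => subset_sUnion_of_mem hs⟩)
      T0 ⟨hT0.2, hsub⟩
  have hclosure : m = closure m :=
    hmax.eq_of_le ⟨hmax.1.1.closure, closure_minimal hmax.1.2 hV⟩ subset_closure
  have hclosed : IsClosed m := by rw [hclosure]; exact isClosed_closure
  refine ⟨m, ⟨hclosed, ⟨hT0.nonempty.mono hm0, hmax.1.1⟩, hmax.1.2, ?_⟩, hm0⟩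
  intro T' hc hi hsV hmT'
  exact (hmax.eq_of_le ⟨hi.2, hsV⟩ hmT').symm

/-- A preirreducible set is contained in the closure of its part outside any closed
set it is not contained in. -/
lemma aux_subset_closure_diff {s w : Set X} (hs : IsPreirreducible s) (hw : IsClosed w)
    (hne : (s \ w).Nonempty) : s ⊆ closure (s \ w) := by
  intro z hz
  rw [mem_closure_iff]
  intro o ho hzo
  obtain ⟨x, hxs, hxo, hxw⟩ := hs o wᶜ ho hw.isOpen_compl ⟨z, hz, hzo⟩
    (by obtain ⟨x, hx1, hx2⟩ := hne; exact ⟨x, hx1, hx2⟩)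
  exact ⟨x, hxo, hxs, hxw⟩

/-- The inclusion of a closed subset into a larger set is a closed embedding. -/
lemma aux_isClosedEmbedding_inclusion {s t : Set X} (h : s ⊆ t) (hs : IsClosed s) :
    Topology.IsClosedEmbedding (Set.inclusion h) := by
  refine ⟨Topology.IsEmbedding.inclusion h, ?_⟩
  rw [Set.range_inclusion]
  exact hs.preimage continuous_subtype_val

/-- Strict monotonicity of dimension for proper closed irreducible subsets. -/
lemma aux_dim_lt_dim {T T'' : Set X} (hTc : IsClosed T) (hTi : IsIrreducible T)
    (hT''i : IsIrreducible T'') (hsub : T ⊆ T'') (hne : T ≠ T'')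
    (hfin : topologicalKrullDim ↥T ≠ ⊤) :
    topologicalKrullDim ↥T < topologicalKrullDim ↥T'' := by
  haveI := Subtype.irreducibleSpace hTi
  haveI := Subtype.irreducibleSpace hT''i
  haveI : Nonempty (IrreducibleCloseds ↥T) :=
    ⟨⟨univ, IrreducibleSpace.isIrreducible_univ _, isClosed_univ⟩⟩
  have hdim : topologicalKrullDim ↥T
      = (((⨆ (p : LTSeries (IrreducibleCloseds ↥T)), (p.length : ℕ∞)) : ℕ∞) : WithBot ℕ∞) :=
    Order.krullDim_eq_iSup_length
  have hlt : (⨆ (p : LTSeries (IrreducibleCloseds ↥T)), (p.length : ℕ∞)) < ⊤ := by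
    rcases lt_or_eq_of_le (le_top (a := ⨆ (p : LTSeries (IrreducibleCloseds ↥T)),
      (p.length : ℕ∞))) with hh | hh
    · exact hh
    · exact absurd (by rw [hdim, hh]; rfl) hfin
  obtain ⟨p, hp⟩ := ENat.exists_eq_iSup_of_lt_top hlt
  -- the closed embedding of T into T''
  have hemb := aux_isClosedEmbedding_inclusion hsub hTc
  set f := IrreducibleCloseds.map (Set.inclusion hsub) hemb.continuous with hf
  have hfmono : StrictMono f := IrreducibleCloseds.map_strictMono_of_isInducing hemb.isInducing
  set btop : IrreducibleCloseds ↥T'' :=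
    ⟨univ, IrreducibleSpace.isIrreducible_univ _, isClosed_univ⟩ with hbtop
  obtain ⟨x, hxT'', hxT⟩ : ∃ x, x ∈ T'' ∧ x ∉ T := by
    by_contra hcon
    push_neg at hcon
    exact hne (subset_antisymm hsub hcon)
  have hltb : ∀ c : IrreducibleCloseds ↥T, f c < btop := by
    intro c
    refine lt_of_le_of_ne (fun y _ => mem_univ y) ?_
    intro heq
    have hmem : (⟨x, hxT''⟩ : ↥T'') ∈ f c := by
      have : (⟨x, hxT''⟩ : ↥T'') ∈ (btop : Set ↥T'') := mem_univ _
      rwa [← heq] at this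
    obtain ⟨y, _, hy2⟩ := (hemb.isClosedMap _ c.isClosed).closure_eq.subset hmem
    apply hxT
    have : (y : X) ∈ T := y.2
    rwa [show (y : X) = x from congrArg Subtype.val hy2] at this
  have hq := Order.LTSeries.length_le_krullDim ((p.map f hfmono).snoc btop (hltb _))
  have hqlen : ((p.map f hfmono).snoc btop (hltb _)).length = p.length + 1 := by
    simp [RelSeries.snoc]
    rfl
  rw [hqlen] at hq
  calc topologicalKrullDim ↥T = ((p.length : ℕ∞) : WithBot ℕ∞) := by rw [hdim, hp]
    _ < (((p.length + 1 : ℕ) : ℕ∞) : WithBot ℕ∞) := by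
        apply WithBot.coe_lt_coe.mpr
        exact_mod_cast Nat.lt_succ_self _
    _ ≤ topologicalKrullDim ↥T'' := by exact_mod_cast hq

theorem canonical_presentation_dim_drop
    {X : Type*} [TopologicalSpace X] [NoetherianSpace X]
    (hdim : topologicalKrullDim X < ⊤)
    (C : Set X) (hC : PaperConstructible C) (hCne : C.Nonempty)
    (V' V'' : ℕ → Set X)
    (h : IsCanonicalPresentation C V' V'')
    (hne : (V'' 0).Nonempty) :
    closure C = V' 0 ∧
    ∀ T : Set X, IsIrredCompOf T (V'' 0) →
      topologicalKrullDim ↥T <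
        sSup {d : WithBot ℕ∞ | ∃ T' : Set X, IsIrredCompOf T' (V' 0) ∧
          d = topologicalKrullDim ↥T'} := by
  obtain ⟨h1, h2, h3, h4, h5, h6, h7, h8, h9⟩ := h
  have hsub0 : ∀ i, V' i ⊆ V' 0 := by
    intro i
    induction i with
    | zero => exact subset_rfl
    | succ n ih => exact ((h4 n).trans (h3 n)).trans ih
  have hCsub : C ⊆ V' 0 := by
    rw [h6]
    exact iUnion_subset fun i => diff_subset.trans (hsub0 i)
  have hclosure : closure C = V' 0 := by
    refine subset_antisymm (closure_minimal hCsub (h1 0)) ?_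
    intro x hx
    obtain ⟨T, hT, hxT⟩ :=
      aux_exists_isIrredCompOf (h1 0) isIrreducible_singleton (singleton_subset_iff.mpr hx)
    have hTnot : ¬ T ⊆ V'' 0 := by
      intro hTsub
      exact h8 0 T hT ⟨hT.1, hT.2.1, hTsub,
        fun T' hc hi hs hsub => hT.2.2.2 T' hc hi (hs.trans (h3 0)) hsub⟩
    have hdiffne : (T \ V'' 0).Nonempty := by
      rw [diff_nonempty]; exact hTnot
    have hTcl : T ⊆ closure (T \ V'' 0) :=
      aux_subset_closure_diff hT.2.1.2 (h2 0) hdiffne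
    have : T \ V'' 0 ⊆ C := by
      rw [h6]
      intro y hy
      exact mem_iUnion.mpr ⟨0, hT.2.2.1 hy.1, hy.2⟩
    exact closure_mono this (hTcl (hxT rfl))
  refine ⟨hclosure, ?_⟩
  intro T hT
  have hTV'0 : T ⊆ V' 0 := hT.2.2.1.trans (h3 0)
  have hnotcomp : ¬ IsIrredCompOf T (V' 0) := fun hc => h8 0 T hc hT
  have hexT' : ∃ T', IsClosed T' ∧ IsIrreducible T' ∧ T' ⊆ V' 0 ∧ T ⊆ T' ∧ T' ≠ T := by
    by_contra hcon
    push_neg at hcon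
    exact hnotcomp ⟨hT.1, hT.2.1, hTV'0, fun T' hc hi hs hsub => hcon T' hc hi hs hsub⟩
  obtain ⟨T', hT'c, hT'i, hT'V, hTT', hT'ne⟩ := hexT'
  obtain ⟨T'', hT''comp, hT'T''⟩ := aux_exists_isIrredCompOf (h1 0) hT'i hT'V
  have hTT'' : T ⊆ T'' := hTT'.trans hT'T''
  have hTneT'' : T ≠ T'' := by
    intro heq
    exact hT'ne (subset_antisymm (heq ▸ hT'T'') hTT')
  have hfin : topologicalKrullDim ↥T ≠ ⊤ := by
    have hle := hT.1.isClosedEmbedding_subtypeVal.isInducing.topologicalKrullDim_le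
    exact (lt_of_le_of_lt hle hdim).ne
  have hstrict : topologicalKrullDim ↥T < topologicalKrullDim ↥T'' :=
    aux_dim_lt_dim hT.1 hT.2.1 hT''comp.2.1 hTT'' hTneT'' hfin
  exact lt_of_lt_of_le hstrict (le_sSup ⟨T'', hT''comp, rfl⟩)
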